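/- If an n-partite orthogonal product basis S of ℂ^{d₁}⊗...⊗ℂ^{dₙ} contains a product state |v₁⟩⊗...⊗|vₙ⟩ whose first factor |v₁⟩ appears with multiplicity exactly d₂⋯dₙ (counting proportional copies), then S is A₁-reducible: every other state of S has first factor orthogonal to |v₁⟩. -/

import Mathlib

open scoped ComplexInnerProductSpace Matrix
noncomputable section
/-- The state space of an `n`-partite system with local dimensions `d i`,
modelling `ℂ^{d 0} ⊗ ... ⊗ ℂ^{d (n-1)}`. -/
abbrev GState {n : ℕ} (d : Fin n → ℕ) := EuclideanSpace ℂ (∀ i, Fin (d i))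
/-- The product state `v 0 ⊗ v 1 ⊗ ... ⊗ v (n-1)`. -/
def prodState {n : ℕ} (d : Fin n → ℕ) (v : ∀ i, EuclideanSpace ℂ (Fin (d i))) : GState d :=
  WithLp.toLp 2 fun x => ∏ i, v i (x i)
/-- A family of product states (given by their local factors `a j`) is reducible at
party `p` if the states split into two nonempty groups whose `p`-th factors are
mutually orthogonal. -/
def ReducibleAt {n : ℕ} {d : Fin n → ℕ} {J : Type}
    (a : J → ∀ i, EuclideanSpace ℂ (Fin (d i))) (p : Fin n) : Prop :=
  ∃ T : Set J, T.Nonempty ∧ Tᶜ.Nonempty ∧ ∀ j ∈ T, ∀ k ∈ Tᶜ, ⟪a j p, a k p⟫ = 0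

lemma inner_prodState {n : ℕ} (d : Fin n → ℕ) (u v : ∀ i, EuclideanSpace ℂ (Fin (d i))) :
    ⟪prodState d u, prodState d v⟫ = ∏ i, ⟪u i, v i⟫ := by
  classical
  simp only [PiLp.inner_apply, RCLike.inner_apply, prodState]
  rw [Fintype.prod_sum (fun i y => v i y * (starRingEnd ℂ) (u i y))]
  congr 1
  ext x
  rw [map_prod, Finset.prod_mul_distrib]

lemma prodState_ne_zero {n : ℕ} (d : Fin n → ℕ) (v : ∀ i, EuclideanSpace ℂ (Fin (d i)))
    (hv : ∀ i, v i ≠ 0) : prodState d v ≠ 0 := by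
  classical
  have hx : ∀ i, ∃ y, v i y ≠ 0 := by
    intro i
    by_contra h
    push_neg at h
    exact hv i (by ext y; simp [h y])
  choose x hx using hx
  intro h
  have : prodState d v x = 0 := by rw [h]; rfl
  rw [prodState] at this
  exact ((Finset.prod_ne_zero_iff (s := Finset.univ)).2 fun i _ => hx i) this

/-- If in an `n`-partite OPB some first factor `a j₀ 0` occurs with
multiplicity exactly `d₂⋯dₙ` (counting proportional copies), then the OPB is
`A₁`-reducible: every state whose first factor is not proportional to `a j₀ 0` has
first factor orthogonal to it. -/
theorem full_multiplicity_implies_reducible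
    {n : ℕ} {d : Fin (n + 1) → ℕ}
    (a : Fin (∏ i, d i) → ∀ i, EuclideanSpace ℂ (Fin (d i)))
    (hnz : ∀ j i, a j i ≠ 0)
    (horth : ∀ j k, j ≠ k → ⟪prodState d (a j), prodState d (a k)⟫ = 0)
    (hspan : Submodule.span ℂ (Set.range fun j => prodState d (a j)) = ⊤)
    (j₀ : Fin (∏ i, d i))
    (hmult : Nat.card {k : Fin (∏ i, d i) // ∃ c : ℂ, c ≠ 0 ∧ a k 0 = c • a j₀ 0}
      = ∏ i : Fin n, d i.succ) :
    ∀ k, (∀ c : ℂ, c ≠ 0 → a k 0 ≠ c • a j₀ 0) → ⟪a j₀ 0, a k 0⟫ = 0 := by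
  classical
  intro k hk
  by_contra hik
  set d' : Fin n → ℕ := fun i => d i.succ with hd'
  set T := {k : Fin (∏ i, d i) // ∃ c : ℂ, c ≠ 0 ∧ a k 0 = c • a j₀ 0} with hT
  haveI : Fintype T := Fintype.ofFinite T
  -- the tail states
  set b : T → GState d' := fun t => prodState d' (fun i => a t.1 i.succ) with hb
  have hknotT : ∀ t : T, t.1 ≠ k := by
    rintro ⟨t, c, hc, hct⟩ rfl
    exact hk c hc hct
  -- inner products with first factor proportional
  have hfirst : ∀ (t : T) (m : Fin (∏ i, d i)),
      ⟪a j₀ 0, a m 0⟫ ≠ 0 → ⟪a t.1 0, a m 0⟫ ≠ 0 := by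
    intro t m hm
    obtain ⟨c, hc, hct⟩ := t.2
    rw [hct, inner_smul_left]
    refine mul_ne_zero ?_ hm
    rw [starRingEnd_apply]
    exact star_ne_zero.2 hc
  have hj₀ : ∀ t : T, ⟪a j₀ 0, a t.1 0⟫ ≠ 0 := by
    intro t
    obtain ⟨c, hc, hct⟩ := t.2
    rw [hct, inner_smul_right]
    refine mul_ne_zero hc ?_
    rw [inner_self_ne_zero]
    exact hnz j₀ 0
  -- b is pairwise orthogonal
  have hborth : ∀ s t : T, s ≠ t → ⟪b s, b t⟫ = 0 := by
    intro s t hst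
    have hne : s.1 ≠ t.1 := fun h => hst (Subtype.ext h)
    have h0 := horth s.1 t.1 hne
    rw [inner_prodState, Fin.prod_univ_succ] at h0
    have h1 : ⟪a s.1 0, a t.1 0⟫ ≠ 0 := hfirst s t.1 (hj₀ t)
    rw [inner_prodState]
    exact (mul_eq_zero.1 h0).resolve_left h1
  have hbnz : ∀ t : T, b t ≠ 0 := fun t =>
    prodState_ne_zero d' _ (fun i => hnz t.1 i.succ)
  -- b is linearly independent
  have hli : LinearIndependent ℂ b :=
    linearIndependent_of_ne_zero_of_inner_eq_zero hbnz hborth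
  -- card T = finrank of tail space
  have hcard : Fintype.card T = Module.finrank ℂ (GState d') := by
    rw [finrank_euclideanSpace, Fintype.card_pi]
    simp only [Fintype.card_fin]
    rw [← Nat.card_eq_fintype_card, hmult]
  haveI : Nonempty T := by
    refine ⟨⟨j₀, 1, one_ne_zero, (one_smul _ _).symm⟩⟩
  have hspan' : Submodule.span ℂ (Set.range b) = ⊤ :=
    hli.span_eq_top_of_card_eq_finrank hcard
  -- the tail of k is orthogonal to every b t
  set w : GState d' := prodState d' (fun i => a k i.succ) with hw
  have hwz : ∀ t : T, ⟪b t, w⟫ = 0 := by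
    intro t
    have h0 := horth t.1 k (hknotT t)
    rw [inner_prodState, Fin.prod_univ_succ] at h0
    have h1 : ⟪a t.1 0, a k 0⟫ ≠ 0 := hfirst t k hik
    rw [inner_prodState]
    exact (mul_eq_zero.1 h0).resolve_left h1
  -- hence w = 0
  have hwmem : w ∈ (Submodule.span ℂ (Set.range b))ᗮ := by
    rw [Submodule.mem_orthogonal]
    intro u hu
    induction hu using Submodule.span_induction with
    | mem u hu => obtain ⟨t, rfl⟩ := hu; exact hwz t
    | zero => exact inner_zero_left _
    | add u v _ _ hu hv => rw [inner_add_left, hu, hv, add_zero]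
    | smul c u _ hu => rw [inner_smul_left, hu, mul_zero]
  rw [hspan', Submodule.top_orthogonal_eq_bot, Submodule.mem_bot] at hwmem
  exact prodState_ne_zero d' _ (fun i => hnz k i.succ) hwmem
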